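/- arXiv:2510.01602 — 6 statements merged into one kernel-verified Lean document; each statement's English description precedes it below -/
import Mathlib

section
/- For all s ∈ [-1,1] and t ∈ [-1,1], 2(11 + s²) - (s-1)² t (8 + (s-3)t) ≥ 17 + 9s - s² - s³, and moreover 17 + 9s - s² - s³ > 0 for all s ∈ [-1,1]. -/
theorem stmt_1 (s t : ℝ) (hs : s ∈ Set.Icc (-1:ℝ) 1) (ht : t ∈ Set.Icc (-1:ℝ) 1) :
    2 * (11 + s^2) - (s - 1)^2 * t * (8 + (s - 3) * t) ≥ 17 + 9*s - s^2 - s^3 ∧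
    17 + 9*s - s^2 - s^3 > 0 := by
  obtain ⟨hs1, hs2⟩ := hs
  obtain ⟨ht1, ht2⟩ := ht
  constructor
  · nlinarith [mul_nonneg (sq_nonneg (s-1)) (mul_nonneg (by linarith : (0:ℝ) ≤ s+1)
        (by nlinarith : (0:ℝ) ≤ 1 - t^2)),
      mul_nonneg (sq_nonneg (s-1)) (sq_nonneg (t-1))]
  · nlinarith [sq_nonneg (s-1), sq_nonneg (s+1)]
end

section
/- For all s ∈ [-1,1] and t ∈ [-1,1], 8(5+s)(2(5-s) + (s-1)t(8 + (s-1)t)) ≥ 8(1+s)(3+s)(5+s) ≥ 0. -/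
theorem stmt_2 (s t : ℝ) (hs : s ∈ Set.Icc (-1:ℝ) 1) (ht : t ∈ Set.Icc (-1:ℝ) 1) :
    8 * (5 + s) * (2 * (5 - s) + (s - 1) * t * (8 + (s - 1) * t)) ≥
      8 * (1 + s) * (3 + s) * (5 + s) ∧
    8 * (1 + s) * (3 + s) * (5 + s) ≥ 0 := by
  obtain ⟨hs1, hs2⟩ := hs
  obtain ⟨ht1, ht2⟩ := ht
  constructor
  · nlinarith [mul_nonneg (mul_nonneg (by linarith : (0:ℝ) ≤ 5 + s)
      (by nlinarith : (0:ℝ) ≤ (1 - s) - (1 - s) * t))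
      (by nlinarith : (0:ℝ) ≤ (7 + s) - (1 - s) * t)]
  · have : (0:ℝ) ≤ 1 + s := by linarith
    nlinarith [mul_nonneg (mul_nonneg this (by linarith : (0:ℝ) ≤ 3 + s)) (by linarith : (0:ℝ) ≤ 5 + s)]
end

section
/- For all s ∈ [-1,1] and t ∈ [-1,1], 16(3 + s²) + (s-1)t(8(7 + s²) + (s-1)(17 + s(2+s))t) ≥ (1+s)²(3+s)² ≥ 0. -/
theorem stmt_3 (s t : ℝ) (hs : s ∈ Set.Icc (-1:ℝ) 1) (ht : t ∈ Set.Icc (-1:ℝ) 1) :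
    16 * (3 + s^2) + (s - 1) * t * (8 * (7 + s^2) + (s - 1) * (17 + s * (2 + s)) * t) ≥
      (1 + s)^2 * (3 + s)^2 ∧
    (1 + s)^2 * (3 + s)^2 ≥ 0 := by
  obtain ⟨hs1, hs2⟩ := hs
  obtain ⟨ht1, ht2⟩ := ht
  constructor
  · have h1 : (0:ℝ) ≤ (1 - t) * ((1 - s) * ((1 + s) * (s^2 + 4*s + 11))) := by
      apply mul_nonneg (by linarith)
      apply mul_nonneg (by linarith)
      apply mul_nonneg (by linarith)
      nlinarith [sq_nonneg (s+2)]
    have h2 : (0:ℝ) ≤ ((s-1)*(1-t))^2 * ((s+1)^2 + 16) := by positivity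
    nlinarith [h1, h2]
  · positivity
end

section
/- For every f ∈ (0,1), the quadratic φ(u) = (1/6)[(62 - f(62 - 15f)) u² - (20 - f)(2 - f) u + 6] is strictly positive for all u ≥ 1. In particular φ(1) = (1/3)(14 + f(-20 + 7f)) > 0. -/
theorem stmt_6 (f : ℝ) (hf : f ∈ Set.Ioo (0:ℝ) 1) :
    (∀ u : ℝ, 1 ≤ u →
      0 < (1/6) * ((62 - f * (62 - 15 * f)) * u^2 - (20 - f) * (2 - f) * u + 6)) ∧
    (1/6) * ((62 - f * (62 - 15 * f)) * 1^2 - (20 - f) * (2 - f) * 1 + 6) =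
      (1/3) * (14 + f * (-20 + 7 * f)) ∧
    0 < (1/3) * (14 + f * (-20 + 7 * f)) := by
  obtain ⟨hf0, hf1⟩ := hf
  refine ⟨fun u hu => ?_, by ring, by nlinarith⟩
  nlinarith [sq_nonneg (u - 1), mul_pos hf0 (sub_pos.2 hf1), sq_nonneg f,
    mul_nonneg (mul_nonneg hf0.le (sub_pos.2 hf1).le) (sub_nonneg.2 hu),
    mul_nonneg (sub_nonneg.2 hu) (sub_nonneg.2 hu), sq_nonneg (f*(u-1)),
    mul_nonneg (mul_nonneg hf0.le hf0.le) (sq_nonneg (u-1))]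
end

section
/- For every f ∈ (0,1) and s ∈ [-1,1], (5 - 4f + s)(f²(7+s) + (3+s)(9+s) - 4f(7+2s)) > (5 - 4f + s)(2+s)(3+s) > 0. -/
theorem stmt_7 (f s : ℝ) (hf : f ∈ Set.Ioo (0:ℝ) 1) (hs : s ∈ Set.Icc (-1:ℝ) 1) :
    (5 - 4*f + s) * (f^2 * (7 + s) + (3 + s) * (9 + s) - 4 * f * (7 + 2*s)) >
      (5 - 4*f + s) * (2 + s) * (3 + s) ∧
    (5 - 4*f + s) * (2 + s) * (3 + s) > 0 := by
  obtain ⟨hf0, hf1⟩ := hf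
  obtain ⟨hs1, hs2⟩ := hs
  constructor
  · nlinarith [mul_pos (sub_pos.mpr hf1) (by nlinarith : (0:ℝ) < 21 + 7*s - (7+s)*f),
      mul_pos hf0 hf0, sq_nonneg (1-f)]
  · nlinarith [mul_pos (show (0:ℝ) < 5-4*f+s by nlinarith) (show (0:ℝ) < (2+s)*(3+s) by nlinarith)]
end

section
/- Let ν > 0, f ∈ (0,1), C > 0, ξ₁* > 0 and let h : ℝ → ℝ be nonnegative, continuously differentiable, not identically zero, satisfying ξ₁* h'(ξ₂) ≥ 2(Reλ + ν(a² + ξ₂²))h(ξ₂) − 2C h(ξ₂) for all ξ₂ ∈ ℝ, where a ≥ 0 and λ ∈ ℂ are fixed, and h(ξ₂₀) > 0 for some ξ₂₀. Then h is unbounded as ξ₂ → +∞; in particular h ∉ L^∞(ℝ) and h is not the restriction of an L² function's square modulus with ∫ ξ₂⁴ h(ξ₂) dξ₂ < ∞. -/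
open MeasureTheory

theorem stmt_19 (ν f C ξ₁star a : ℝ) (lam : ℂ) (h : ℝ → ℝ)
    (hν : 0 < ν) (hf : f ∈ Set.Ioo (0:ℝ) 1) (hC : 0 < C) (hξ₁ : 0 < ξ₁star)
    (ha : 0 ≤ a)
    (hpos : ∀ x, 0 ≤ h x) (hC1 : ContDiff ℝ 1 h)
    (hineq : ∀ ξ₂ : ℝ, ξ₁star * deriv h ξ₂ ≥
      2 * (lam.re + ν * (a^2 + ξ₂^2)) * h ξ₂ - 2 * C * h ξ₂)
    (ξ₂₀ : ℝ) (h0 : 0 < h ξ₂₀) :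
    Filter.Tendsto h Filter.atTop Filter.atTop ∧
    ¬ BddAbove (Set.range h) ∧
    ¬ Integrable (fun ξ₂ : ℝ => ξ₂^4 * h ξ₂) := by
  have hdiff : Differentiable ℝ h := hC1.differentiable one_ne_zero
  set c₀ : ℝ := 2 * (lam.re - C + ν * a ^ 2) / ξ₁star with hc₀
  set c₁ : ℝ := 2 * ν / ξ₁star with hc₁
  have hc₁pos : 0 < c₁ := by positivity
  set G : ℝ → ℝ := fun x => c₀ * x + c₁ * x ^ 3 / 3 with hG
  have hG' : ∀ x, HasDerivAt G (c₀ + c₁ * x ^ 2) x := by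
    intro x
    have h1 : HasDerivAt (fun x : ℝ => c₀ * x) c₀ x := by
      simpa using (hasDerivAt_id x).const_mul c₀
    have h2 : HasDerivAt (fun x : ℝ => c₁ * x ^ 3 / 3) (c₁ * x ^ 2) x := by
      have := ((hasDerivAt_pow 3 x).const_mul c₁).div_const 3
      refine this.congr_deriv ?_
      ring
    exact h1.add h2
  -- derivative inequality: deriv h x ≥ (c₀ + c₁ x²) * h x
  have key : ∀ x, (c₀ + c₁ * x ^ 2) * h x ≤ deriv h x := by
    intro x
    have := hineq x
    have hx : (c₀ + c₁ * x ^ 2) = (2 * (lam.re + ν * (a ^ 2 + x ^ 2)) - 2 * C) / ξ₁star := by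
      rw [hc₀, hc₁]
      field_simp
      ring
    rw [hx, div_mul_eq_mul_div, div_le_iff₀ hξ₁]
    nlinarith [hineq x]
  -- F = h * exp(-G) is monotone
  set F : ℝ → ℝ := fun x => h x * Real.exp (-G x) with hF
  have hFd : ∀ x, HasDerivAt F
      ((deriv h x - (c₀ + c₁ * x ^ 2) * h x) * Real.exp (-G x)) x := by
    intro x
    have hh := (hdiff x).hasDerivAt
    have hexp : HasDerivAt (fun x => Real.exp (-G x))
        (Real.exp (-G x) * -(c₀ + c₁ * x ^ 2)) x := ((hG' x).neg).exp
    have := hh.mul hexp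
    refine this.congr_deriv ?_
    ring
  have hFmono : Monotone F := by
    have : ∀ x, 0 ≤ (deriv h x - (c₀ + c₁ * x ^ 2) * h x) * Real.exp (-G x) := by
      intro x
      have := key x
      exact mul_nonneg (by linarith) (Real.exp_nonneg _)
    refine monotone_of_deriv_nonneg (fun x => (hFd x).differentiableAt) ?_
    intro x
    rw [(hFd x).deriv]
    exact this x
  -- lower bound for h
  have hlow : ∀ x, ξ₂₀ ≤ x → F ξ₂₀ * Real.exp (G x) ≤ h x := by
    intro x hx
    have := hFmono hx
    have hx2 : F ξ₂₀ * Real.exp (G x) ≤ F x * Real.exp (G x) := by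
      exact mul_le_mul_of_nonneg_right this (Real.exp_nonneg _)
    calc F ξ₂₀ * Real.exp (G x) ≤ F x * Real.exp (G x) := hx2
      _ = h x := by
        simp only [hF]
        rw [mul_assoc, ← Real.exp_add]
        simp
  have hF0pos : 0 < F ξ₂₀ := by
    simp only [hF]
    positivity
  -- G tends to atTop
  have hGtop : Filter.Tendsto G Filter.atTop Filter.atTop := by
    have h1 : Filter.Tendsto (fun x : ℝ => c₀ + c₁ * x ^ 2 / 3) Filter.atTop Filter.atTop := by
      apply Filter.tendsto_atTop_add_const_left
      apply Filter.Tendsto.atTop_div_const (by norm_num)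
      apply Filter.Tendsto.const_mul_atTop hc₁pos
      exact Filter.tendsto_pow_atTop (by norm_num)
    have h2 : Filter.Tendsto (fun x : ℝ => x * (c₀ + c₁ * x ^ 2 / 3))
        Filter.atTop Filter.atTop := Filter.Tendsto.atTop_mul_atTop₀ Filter.tendsto_id h1
    refine h2.congr' ?_
    filter_upwards with x
    simp only [hG]
    ring
  have htop : Filter.Tendsto h Filter.atTop Filter.atTop := by
    have hexp : Filter.Tendsto (fun x => F ξ₂₀ * Real.exp (G x)) Filter.atTop Filter.atTop :=
      Filter.Tendsto.const_mul_atTop hF0pos (Real.tendsto_exp_atTop.comp hGtop)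
    refine Filter.tendsto_atTop_mono' _ ?_ hexp
    filter_upwards [Filter.eventually_ge_atTop ξ₂₀] with x hx
    exact hlow x hx
  refine ⟨htop, ?_, ?_⟩
  · rintro ⟨M, hM⟩
    obtain ⟨x, hx⟩ := (htop.eventually_gt_atTop M).exists
    exact absurd (hM (Set.mem_range_self x)) (not_le.mpr hx)
  · intro hint
    have hfin := hint.measure_ge_lt_top (ε := 1) one_pos
    have htop2 : Filter.Tendsto (fun x : ℝ => x ^ 4 * h x) Filter.atTop Filter.atTop := by
      refine Filter.tendsto_atTop_mono' _ ?_ htop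
      filter_upwards [Filter.eventually_ge_atTop (1 : ℝ)] with x hx
      nlinarith [hpos x, one_le_pow₀ (n := 4) hx]
    obtain ⟨R, hR⟩ := (Filter.eventually_atTop).mp (htop2.eventually_ge_atTop 1)
    have hsub : Set.Ici R ⊆ {x : ℝ | 1 ≤ x ^ 4 * h x} := fun x hx => hR x hx
    have : (volume : Measure ℝ) (Set.Ici R) ≤ volume {x : ℝ | 1 ≤ x ^ 4 * h x} :=
      measure_mono hsub
    rw [Real.volume_Ici] at this
    exact absurd (lt_of_le_of_lt this hfin) (by simp)
end
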